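/- There are exactly 5 equivalence classes (under x ↦ x+t, t ∈ ℤ) of integer quadratics ax^2+bx+c with a(b^2-4ac) = 15, and exactly 4 of them satisfy b^2-4ac > 0. -/
import Mathlib

/-- The superdiscriminant `I(f) = a*(b^2 - 4*a*c)` of the integer quadratic
polynomial `f(x) = a*x^2 + b*x + c`, encoded as the triple `(a, b, c)`. -/
def superdisc (p : ℤ × ℤ × ℤ) : ℤ := p.1 * (p.2.1 ^ 2 - 4 * p.1 * p.2.2)

/-- Equivalence of integer quadratics under the substitution `x ↦ x + t`, `t ∈ ℤ`:
`a*(x+t)^2 + b*(x+t) + c = a*x^2 + (b + 2*a*t)*x + (a*t^2 + b*t + c)`. -/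
def quadEquiv (p q : ℤ × ℤ × ℤ) : Prop :=
  ∃ t : ℤ, q = (p.1, p.2.1 + 2 * p.1 * t, p.1 * t ^ 2 + p.2.1 * t + p.2.2)

/-- The number of equivalence classes (under `x ↦ x + t`) of integer quadratics
with superdiscriminant `n` satisfying the extra condition `P`. -/
noncomputable def quadCount (n : ℤ) (P : ℤ × ℤ × ℤ → Prop) : ℕ :=
  Nat.card (Quot (fun p q : {p : ℤ × ℤ × ℤ // superdisc p = n ∧ P p} =>
    quadEquiv p.1 q.1))

lemma zmod_contra (m : ℕ) [NeZero m] {b c k : ℤ} (h : b ^ 2 + (m : ℤ) * c = k)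
    (hk : ∀ x : ZMod m, x ^ 2 ≠ (k : ZMod m)) : False := by
  apply hk (b : ZMod m)
  have h2 := congrArg (fun z : ℤ => (z : ZMod m)) h
  push_cast at h2
  simpa using h2

lemma key {a b c : ℤ} (h : a * (b ^ 2 - 4 * a * c) = 15) :
    (a = -1 ∧ b ^ 2 + 4 * c = -15 ∧ b % 2 = 1) ∨
    (a = 15 ∧ b ^ 2 - 60 * c = 1 ∧
      (b % 30 = 1 ∨ b % 30 = 11 ∨ b % 30 = 19 ∨ b % 30 = 29)) := by
  have hdvd : a ∣ 15 := ⟨_, h.symm⟩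
  have hub : a ≤ 15 := Int.le_of_dvd (by norm_num) hdvd
  have hlb : -15 ≤ a := by
    have h' : -a ∣ 15 := (neg_dvd).mpr hdvd
    have := Int.le_of_dvd (by norm_num) h'
    omega
  interval_cases a
  all_goals try (exfalso; revert hdvd; decide)
  -- remaining: a = -15, -5, -3, -1, 1, 3, 5, 15
  · refine (zmod_contra 60 (show b ^ 2 + (60:ℤ) * c = -1 from ?_) (by decide)).elim
    have := mul_left_cancel₀ (show (-15:ℤ) ≠ 0 by norm_num)
      (show (-15:ℤ) * (b ^ 2 + 60 * c) = (-15) * (-1) by linear_combination h)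
    linarith
  · refine (zmod_contra 20 (show b ^ 2 + (20:ℤ) * c = -3 from ?_) (by decide)).elim
    have := mul_left_cancel₀ (show (-5:ℤ) ≠ 0 by norm_num)
      (show (-5:ℤ) * (b ^ 2 + 20 * c) = (-5) * (-3) by linear_combination h)
    linarith
  · refine (zmod_contra 12 (show b ^ 2 + (12:ℤ) * c = -5 from ?_) (by decide)).elim
    have := mul_left_cancel₀ (show (-3:ℤ) ≠ 0 by norm_num)
      (show (-3:ℤ) * (b ^ 2 + 12 * c) = (-3) * (-5) by linear_combination h)
    linarith
  · -- a = -1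
    left
    have h1 : b ^ 2 + 4 * c = -15 := by linear_combination -h
    refine ⟨rfl, h1, ?_⟩
    rcases Int.even_or_odd b with ⟨k, hk⟩ | ⟨k, hk⟩
    · exact absurd (show (4:ℤ) ∣ -15 from ⟨k * k + c, by linear_combination -h1 + (b + 2*k) * hk⟩)
        (by norm_num)
    · omega
  · refine (zmod_contra 4 (show b ^ 2 + (4:ℤ) * (-c) = 15 from by linear_combination h)
      (by decide)).elim
  · refine (zmod_contra 12 (show b ^ 2 + (12:ℤ) * (-c) = 5 from ?_) (by decide)).elim
    have := mul_left_cancel₀ (show (3:ℤ) ≠ 0 by norm_num)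
      (show (3:ℤ) * (b ^ 2 - 12 * c) = 3 * 5 by linear_combination h)
    linarith
  · refine (zmod_contra 20 (show b ^ 2 + (20:ℤ) * (-c) = 3 from ?_) (by decide)).elim
    have := mul_left_cancel₀ (show (5:ℤ) ≠ 0 by norm_num)
      (show (5:ℤ) * (b ^ 2 - 20 * c) = 5 * 3 by linear_combination h)
    linarith
  · -- a = 15
    right
    have hD : b ^ 2 - 60 * c = 1 := by
      have := mul_left_cancel₀ (show (15:ℤ) ≠ 0 by norm_num)
        (show (15:ℤ) * (b ^ 2 - 60 * c) = 15 * 1 by linear_combination h)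
      linarith
    refine ⟨rfl, hD, ?_⟩
    obtain ⟨r, hr⟩ : ∃ r, b % 30 = r := ⟨_, rfl⟩
    obtain ⟨k, hk⟩ : ∃ k, b = 30 * k + r := ⟨b / 30, by omega⟩
    have hr0 : 0 ≤ r := by omega
    have hr30 : r < 30 := by omega
    have hbk : r = b - 30 * k := by omega
    have h60 : (60:ℤ) ∣ r ^ 2 - 1 :=
      ⟨c - k * b + 15 * k ^ 2, by linear_combination hD + (r + b - 30 * k) * hbk⟩
    rw [hr]
    have h60' : (60:ℤ) ∣ r * r - 1 := by
      have : r ^ 2 = r * r := sq r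
      rwa [this] at h60
    interval_cases r <;> omega

lemma quadEquiv_neg {b c b' c' : ℤ} (h1 : b ^ 2 + 4 * c = -15) (h2 : b' ^ 2 + 4 * c' = -15)
    (hb : b % 2 = 1) (hb' : b' % 2 = 1) :
    quadEquiv (-1, b, c) (-1, b', c') := by
  obtain ⟨t, ht⟩ : ∃ t, b' = b - 2 * t := ⟨(b - b') / 2, by omega⟩
  refine ⟨t, ?_⟩
  have h4 : 4 * c' = 4 * ((-1) * t ^ 2 + b * t + c) := by
    linear_combination h2 - h1 - (b + b' - 2 * t) * ht
  have hc : c' = (-1) * t ^ 2 + b * t + c := by linarith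
  simp only [Prod.mk.injEq]
  exact ⟨by norm_num, by linarith, hc⟩

lemma quadEquiv_15 {b c b' c' : ℤ} (h1 : b ^ 2 - 60 * c = 1) (h2 : b' ^ 2 - 60 * c' = 1)
    (hb : b % 30 = b' % 30) :
    quadEquiv (15, b, c) (15, b', c') := by
  obtain ⟨t, ht⟩ : ∃ t, b' = b + 30 * t := ⟨(b' - b) / 30, by omega⟩
  refine ⟨t, ?_⟩
  have h60 : 60 * c' = 60 * (15 * t ^ 2 + b * t + c) := by
    linear_combination h1 - h2 + (b' + b + 30 * t) * ht
  have hc : c' = 15 * t ^ 2 + b * t + c := by linarith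
  simp only [Prod.mk.injEq]
  exact ⟨by norm_num, by linarith, hc⟩

def idx5 (p : ℤ × ℤ × ℤ) : Fin 5 :=
  if p.1 = -1 then 0
  else if p.2.1 % 30 = 1 then 1
  else if p.2.1 % 30 = 29 then 2
  else if p.2.1 % 30 = 11 then 3
  else 4

def idx4 (p : ℤ × ℤ × ℤ) : Fin 4 :=
  if p.2.1 % 30 = 1 then 0
  else if p.2.1 % 30 = 29 then 1
  else if p.2.1 % 30 = 11 then 2
  else 3

lemma idx5_invariant {p q : ℤ × ℤ × ℤ} (hp : superdisc p = 15) (h : quadEquiv p q) :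
    idx5 p = idx5 q := by
  obtain ⟨a, b, c⟩ := p
  obtain ⟨t, rfl⟩ := h
  rcases key (by simpa [superdisc] using hp) with ⟨rfl, -, -⟩ | ⟨rfl, -, -⟩
  · simp [idx5]
  · have hmod : (b + 2 * 15 * t) % 30 = b % 30 := by omega
    simp [idx5, hmod]

lemma idx4_invariant {p q : ℤ × ℤ × ℤ} (hp : superdisc p = 15)
    (hP : 0 < p.2.1 ^ 2 - 4 * p.1 * p.2.2) (h : quadEquiv p q) :
    idx4 p = idx4 q := by
  obtain ⟨a, b, c⟩ := p
  obtain ⟨t, rfl⟩ := h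
  rcases key (by simpa [superdisc] using hp) with ⟨rfl, h1, -⟩ | ⟨rfl, -, -⟩
  · exfalso; simp only at hP; nlinarith [hP]
  · have hmod : (b + 2 * 15 * t) % 30 = b % 30 := by omega
    simp [idx4, hmod]

lemma quadEquiv_of_idx5 {p q : ℤ × ℤ × ℤ} (hp : superdisc p = 15) (hq : superdisc q = 15)
    (h : idx5 p = idx5 q) : quadEquiv p q := by
  obtain ⟨a, b, c⟩ := p; obtain ⟨a', b', c'⟩ := q
  rcases key (by simpa [superdisc] using hp) with ⟨rfl, h1, hb⟩ | ⟨rfl, h1, hb⟩ <;>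
    rcases key (by simpa [superdisc] using hq) with ⟨rfl, h2, hb2⟩ | ⟨rfl, h2, hb2⟩
  · exact quadEquiv_neg h1 h2 hb hb2
  · exfalso; rcases hb2 with h3|h3|h3|h3 <;> simp [idx5, h3] at h
  · exfalso; rcases hb with h3|h3|h3|h3 <;> simp [idx5, h3] at h
  · apply quadEquiv_15 h1 h2
    rcases hb with h3|h3|h3|h3 <;> rcases hb2 with h4|h4|h4|h4 <;>
      first | omega | simp [idx5, h3, h4] at h
lemma quadEquiv_of_idx4 {p q : ℤ × ℤ × ℤ} (hp : superdisc p = 15) (hq : superdisc q = 15)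
    (hPp : 0 < p.2.1 ^ 2 - 4 * p.1 * p.2.2) (hPq : 0 < q.2.1 ^ 2 - 4 * q.1 * q.2.2)
    (h : idx4 p = idx4 q) : quadEquiv p q := by
  obtain ⟨a, b, c⟩ := p; obtain ⟨a', b', c'⟩ := q
  simp only at hPp hPq
  rcases key (by simpa [superdisc] using hp) with ⟨rfl, h1, hb⟩ | ⟨rfl, h1, hb⟩
  · exfalso; nlinarith [hPp]
  rcases key (by simpa [superdisc] using hq) with ⟨rfl, h2, hb2⟩ | ⟨rfl, h2, hb2⟩
  · exfalso; nlinarith [hPq]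
  apply quadEquiv_15 h1 h2
  rcases hb with h3|h3|h3|h3 <;> rcases hb2 with h4|h4|h4|h4 <;>
    first | omega | simp [idx4, h3, h4] at h

/-- There are exactly 5 classes of integer quadratics of superdiscriminant 15,
of which exactly 4 have positive discriminant. -/
theorem quad_count_fifteen :
    quadCount 15 (fun _ => True) = 5 ∧
    quadCount 15 (fun p => 0 < p.2.1 ^ 2 - 4 * p.1 * p.2.2) = 4 := by
  constructor
  · refine Nat.card_eq_of_equiv_fin
      (Equiv.ofBijective (Quot.lift (fun p => idx5 p.1)
        (fun p q h => idx5_invariant p.2.1 h)) ⟨?_, ?_⟩)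
    · intro x y
      obtain ⟨p, rfl⟩ := Quot.exists_rep x
      obtain ⟨q, rfl⟩ := Quot.exists_rep y
      intro h
      exact Quot.sound (quadEquiv_of_idx5 p.2.1 q.2.1 h)
    · intro i
      fin_cases i
      · exact ⟨Quot.mk _ ⟨(-1, 1, -4), by norm_num [superdisc], trivial⟩, by decide⟩
      · exact ⟨Quot.mk _ ⟨(15, 1, 0), by norm_num [superdisc], trivial⟩, by decide⟩
      · exact ⟨Quot.mk _ ⟨(15, 29, 14), by norm_num [superdisc], trivial⟩, by decide⟩
      · exact ⟨Quot.mk _ ⟨(15, 11, 2), by norm_num [superdisc], trivial⟩, by decide⟩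
      · exact ⟨Quot.mk _ ⟨(15, 19, 6), by norm_num [superdisc], trivial⟩, by decide⟩
  · refine Nat.card_eq_of_equiv_fin
      (Equiv.ofBijective (Quot.lift (fun p => idx4 p.1)
        (fun p q h => idx4_invariant p.2.1 p.2.2 h)) ⟨?_, ?_⟩)
    · intro x y
      obtain ⟨p, rfl⟩ := Quot.exists_rep x
      obtain ⟨q, rfl⟩ := Quot.exists_rep y
      intro h
      exact Quot.sound (quadEquiv_of_idx4 p.2.1 q.2.1 p.2.2 q.2.2 h)
    · intro i
      fin_cases i
      · exact ⟨Quot.mk _ ⟨(15, 1, 0), by norm_num [superdisc], by norm_num⟩, by decide⟩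
      · exact ⟨Quot.mk _ ⟨(15, 29, 14), by norm_num [superdisc], by norm_num⟩, by decide⟩
      · exact ⟨Quot.mk _ ⟨(15, 11, 2), by norm_num [superdisc], by norm_num⟩, by decide⟩
      · exact ⟨Quot.mk _ ⟨(15, 19, 6), by norm_num [superdisc], by norm_num⟩, by decide⟩
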